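/- Under (A2), for all s > 0 and g ∈ L²(Π_X): ℰ_{Π_X}(P_X, g) ≤ s·ℰ_{Π_X}(P̄_X, g) + β(s)·‖g‖²_osc, where β(s) := ∫ β₂(s, y) Π_Y(dy). -/

import Mathlib

open MeasureTheory ENNReal

noncomputable section

/-- Oscillation seminorm, valued in `[0,∞]`. -/
def oscNorm {α : Type*} [MeasurableSpace α] (μ : Measure α) (f : α → ℝ) : ℝ≥0∞ :=
  essSup (fun p : α × α => ENNReal.ofReal |f p.1 - f p.2|) (μ.prod μ)

/-- The Dirichlet form of a kernel: `(1/2)∬ (f(x) − f(y))² k(x, dy) ν(dx)`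
(which equals `⟨(I − T)f, f⟩_ν` for the induced `ν`-invariant operator `T`). -/
def kernelDirichlet {α : Type*} [MeasurableSpace α]
    (ν : Measure α) (k : α → Measure α) (f : α → ℝ) : ℝ :=
  (1 / 2) * ∫ x, ∫ y, (f x - f y) ^ 2 ∂(k x) ∂ν

/-- Reversibility of a kernel `k` with respect to `ν`. -/
def KernelReversible {α : Type*} [MeasurableSpace α] (ν : Measure α) (k : α → Measure α) : Prop :=
  ∀ A B : Set α, MeasurableSet A → MeasurableSet B →
    ∫⁻ x in A, k x B ∂ν = ∫⁻ x in B, k x A ∂ν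

/-- Positivity of a kernel `k` with respect to `ν`. -/
def KernelPositive {α : Type*} [MeasurableSpace α] (ν : Measure α) (k : α → Measure α) : Prop :=
  ∀ f : α → ℝ, MemLp f 2 ν → 0 ≤ ∫ x, (∫ y, f y ∂(k x)) * f x ∂ν

section Helpers

variable {α β γ : Type*} [MeasurableSpace α] [MeasurableSpace β] [MeasurableSpace γ]

/-- parametrized lintegral measurability -/
lemma meas_lint (m : α → Measure β) (hm : Measurable m) (hp : ∀ a, IsProbabilityMeasure (m a))
    {f : α × β → ℝ≥0∞} (hf : Measurable f) :
    Measurable fun a => ∫⁻ b, f (a, b) ∂(m a) := by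
  have : ProbabilityTheory.IsMarkovKernel (⟨m, hm⟩ : ProbabilityTheory.Kernel α β) := ⟨hp⟩
  exact Measurable.lintegral_kernel_prod_right'
    (κ := (⟨m, hm⟩ : ProbabilityTheory.Kernel α β)) hf

lemma measurable_map_param (m : α → Measure β) (hm : Measurable m)
    (hp : ∀ a, IsProbabilityMeasure (m a)) (e : α → β → γ)
    (he : Measurable (Function.uncurry e)) :
    Measurable fun a => (m a).map (e a) := by
  apply Measure.measurable_of_measurable_coe
  intro C hC
  have h1 : ∀ a, (m a).map (e a) C = ∫⁻ b, C.indicator (fun _ => (1:ℝ≥0∞)) (e a b) ∂(m a) := by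
    intro a
    have hea : Measurable (e a) := he.comp measurable_prodMk_left
    rw [Measure.map_apply hea hC, ← lintegral_indicator_one (hea hC)]
    refine lintegral_congr fun b => ?_
    by_cases hb : e a b ∈ C <;> simp [Set.indicator, hb]
  simp_rw [h1]
  exact meas_lint m hm hp ((measurable_const.indicator hC).comp he)

lemma lint_sq_ofReal {μ : Measure α} {g : α → ℝ}
    (hg : MemLp g 2 μ) : ∫⁻ x, ENNReal.ofReal (g x ^ 2) ∂μ = ENNReal.ofReal (∫ x, g x ^ 2 ∂μ) := by
  refine (ofReal_integral_eq_lintegral_ofReal ?_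
    (Filter.Eventually.of_forall fun x => sq_nonneg _)).symm
  have := hg.integrable_sq
  simpa [pow_two] using this

/-- Key: the double lintegral of the squared difference equals `ofReal (2 * kernelDirichlet)`,
for an invariant measurable kernel. -/
lemma lint_eq_dirichlet (μ : Measure α) [IsProbabilityMeasure μ]
    (k : α → Measure α) (hk : Measurable k) (hkp : ∀ x, IsProbabilityMeasure (k x))
    (hinv : ∀ S : Set α, MeasurableSet S → ∫⁻ x, k x S ∂μ = μ S)
    (g : α → ℝ) (hgm : Measurable g) (hg : MemLp g 2 μ) :
    ∫⁻ x, ∫⁻ x', ENNReal.ofReal ((g x - g x') ^ 2) ∂(k x) ∂μ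
      = ENNReal.ofReal (2 * kernelDirichlet μ k g) := by
  have hφ : Measurable fun p : α × α => ENNReal.ofReal ((g p.1 - g p.2) ^ 2) :=
    (measurable_ofReal.comp (((hgm.comp measurable_fst).sub (hgm.comp measurable_snd)).pow_const 2))
  have hI : Measurable fun x => ∫⁻ x', ENNReal.ofReal ((g x - g x') ^ 2) ∂(k x) :=
    meas_lint k hk hkp hφ
  have hbind : μ.bind k = μ := by
    ext S hS
    rw [Measure.bind_apply hS hk.aemeasurable, hinv S hS]
  have hsq : Measurable fun x => ENNReal.ofReal (g x ^ 2) :=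
    measurable_ofReal.comp (hgm.pow_const 2)
  have hQ : ∫⁻ x, ENNReal.ofReal (g x ^ 2) ∂μ < ⊤ := by
    rw [lint_sq_ofReal hg]; exact ofReal_lt_top
  have hTle : ∫⁻ x, ∫⁻ x', ENNReal.ofReal ((g x - g x') ^ 2) ∂(k x) ∂μ
      ≤ 2 * ∫⁻ x, ENNReal.ofReal (g x ^ 2) ∂μ + 2 * ∫⁻ x, ENNReal.ofReal (g x ^ 2) ∂μ := by
    calc ∫⁻ x, ∫⁻ x', ENNReal.ofReal ((g x - g x') ^ 2) ∂(k x) ∂μ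
        ≤ ∫⁻ x, ∫⁻ x', (2 * ENNReal.ofReal (g x ^ 2) + 2 * ENNReal.ofReal (g x' ^ 2)) ∂(k x) ∂μ := by
          refine lintegral_mono fun x => lintegral_mono fun x' => ?_
          refine le_trans (ENNReal.ofReal_le_ofReal
            (show (g x - g x') ^ 2 ≤ 2 * g x ^ 2 + 2 * g x' ^ 2 by
              nlinarith [sq_nonneg (g x + g x')])) ?_
          refine le_trans ENNReal.ofReal_add_le ?_
          rw [ENNReal.ofReal_mul (by norm_num), ENNReal.ofReal_mul (by norm_num)]
          simp
      _ = 2 * ∫⁻ x, ENNReal.ofReal (g x ^ 2) ∂μ + 2 * ∫⁻ x, ENNReal.ofReal (g x ^ 2) ∂μ := by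
          have h1 : ∀ x : α,
              ∫⁻ x', (2 * ENNReal.ofReal (g x ^ 2) + 2 * ENNReal.ofReal (g x' ^ 2)) ∂(k x)
              = 2 * ENNReal.ofReal (g x ^ 2) + ∫⁻ x', 2 * ENNReal.ofReal (g x' ^ 2) ∂(k x) := by
            intro x
            rw [lintegral_add_left measurable_const, lintegral_const, measure_univ, mul_one]
          simp_rw [h1]
          rw [lintegral_add_left (f := fun x => 2 * ENNReal.ofReal (g x ^ 2)) (measurable_const.mul hsq), lintegral_const_mul 2 hsq,
            ← Measure.lintegral_bind (f := fun x' => 2 * ENNReal.ofReal (g x' ^ 2)) hk.aemeasurable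
              (measurable_const.mul hsq : Measurable fun x' => 2 * ENNReal.ofReal (g x' ^ 2)).aemeasurable,
            hbind, lintegral_const_mul 2 hsq]
  have hT : ∫⁻ x, ∫⁻ x', ENNReal.ofReal ((g x - g x') ^ 2) ∂(k x) ∂μ ≠ ⊤ :=
    (lt_of_le_of_lt hTle (by
      have := hQ.ne
      finiteness)).ne
  have hInner : ∀ x, ∫ x', (g x - g x') ^ 2 ∂(k x)
      = (∫⁻ x', ENNReal.ofReal ((g x - g x') ^ 2) ∂(k x)).toReal := by
    intro x
    rw [integral_eq_lintegral_of_nonneg_ae (Filter.Eventually.of_forall fun x' => sq_nonneg _)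
      (((hgm.const_sub _).pow_const 2).aestronglyMeasurable)]
  have haefin : ∀ᵐ x ∂μ, (∫⁻ x', ENNReal.ofReal ((g x - g x') ^ 2) ∂(k x)) < ⊤ :=
    ae_lt_top hI hT
  have hOuter : ∫ x, ∫ x', (g x - g x') ^ 2 ∂(k x) ∂μ
      = (∫⁻ x, ∫⁻ x', ENNReal.ofReal ((g x - g x') ^ 2) ∂(k x) ∂μ).toReal := by
    simp_rw [hInner]
    exact integral_toReal hI.aemeasurable haefin
  rw [kernelDirichlet]
  rw [show (2 : ℝ) * ((1/2 : ℝ) * ∫ x, ∫ x', (g x - g x') ^ 2 ∂(k x) ∂μ)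
      = ∫ x, ∫ x', (g x - g x') ^ 2 ∂(k x) ∂μ by ring]
  rw [hOuter, ofReal_toReal hT]

open ProbabilityTheory in
lemma dirichlet_const_eq_variance (μ : Measure α) [IsProbabilityMeasure μ]
    (g : α → ℝ) (hg : MemLp g 2 μ) :
    kernelDirichlet μ (fun _ => μ) g = ProbabilityTheory.variance g μ := by
  have hgint : Integrable g μ := hg.integrable one_le_two
  have hQint : Integrable (fun x => g x ^ 2) μ := by simpa [pow_two] using hg.integrable_sq
  set I1 := ∫ x, g x ∂μ with hI1
  set Q := ∫ x, g x ^ 2 ∂μ with hQ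
  have inner : ∀ x, ∫ x', (g x - g x') ^ 2 ∂μ = (g x ^ 2 - 2 * g x * I1) + Q := by
    intro x
    have expand : (fun x' => (g x - g x') ^ 2)
        = fun x' => (g x ^ 2 - 2 * g x * g x') + g x' ^ 2 := by
      funext x'; ring
    have i1 : Integrable (fun x' => 2 * g x * g x') μ := hgint.const_mul (2 * g x)
    have i2 : Integrable (fun x' => g x ^ 2 - 2 * g x * g x') μ := (integrable_const _).sub i1
    rw [expand, integral_add i2 hQint, integral_sub (integrable_const _) i1,
      integral_const, integral_const_mul, probReal_univ]
    simp [hI1, hQ]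
  have i3 : Integrable (fun x => 2 * g x * I1) μ := by
    have : (fun x => 2 * g x * I1) = fun x => (2 * I1) * g x := by funext x; ring
    rw [this]; exact hgint.const_mul _
  have i4 : Integrable (fun x => g x ^ 2 - 2 * g x * I1) μ := hQint.sub i3
  have outer : ∫ x, ∫ x', (g x - g x') ^ 2 ∂μ ∂μ = (Q - 2 * I1 * I1) + Q := by
    simp_rw [inner]
    rw [integral_add i4 (integrable_const _), integral_sub hQint i3, integral_const,
      probReal_univ]
    have : ∫ x, 2 * g x * I1 ∂μ = 2 * I1 * I1 := by
      rw [show (fun x => 2 * g x * I1) = fun x => (2 * I1) * g x from funext fun x => by ring,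
        integral_const_mul]
    rw [this]
    simp [hQ]
  have hvar : ProbabilityTheory.variance g μ = Q - I1 ^ 2 := by
    rw [ProbabilityTheory.variance_eq_sub hg]
    have : μ[g ^ 2] = Q := by simp [pow_two, hQ]
    rw [this]
  rw [kernelDirichlet, outer, hvar]
  ring

lemma lint_eq_variance (μ : Measure α) [IsProbabilityMeasure μ]
    (g : α → ℝ) (hgm : Measurable g) (hg : MemLp g 2 μ) :
    ∫⁻ x, ∫⁻ x', ENNReal.ofReal ((g x - g x') ^ 2) ∂μ ∂μ
      = ENNReal.ofReal (2 * ProbabilityTheory.variance g μ) := by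
  rw [← dirichlet_const_eq_variance μ g hg]
  exact lint_eq_dirichlet μ (fun _ => μ) measurable_const (fun _ => inferInstance)
    (fun S hS => by simp) g hgm hg

lemma ofReal_two_dirichlet_le (ν : Measure α) (k : α → Measure α) (g : α → ℝ) :
    ENNReal.ofReal (2 * kernelDirichlet ν k g)
      ≤ ∫⁻ x, ∫⁻ x', ENNReal.ofReal ((g x - g x') ^ 2) ∂(k x) ∂ν := by
  rw [kernelDirichlet,
    show (2 : ℝ) * ((1/2 : ℝ) * ∫ x, ∫ x', (g x - g x') ^ 2 ∂(k x) ∂ν)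
      = ∫ x, ∫ x', (g x - g x') ^ 2 ∂(k x) ∂ν by ring]
  have step1 : ENNReal.ofReal (∫ x, ∫ x', (g x - g x') ^ 2 ∂(k x) ∂ν)
      ≤ ∫⁻ x, ENNReal.ofReal (∫ x', (g x - g x') ^ 2 ∂(k x)) ∂ν := by
    by_cases hint : Integrable (fun x => ∫ x', (g x - g x') ^ 2 ∂(k x)) ν
    · exact le_of_eq (ofReal_integral_eq_lintegral_ofReal hint
        (Filter.Eventually.of_forall fun x => integral_nonneg fun x' => sq_nonneg _))
    · rw [integral_undef hint]; simp
  refine step1.trans (lintegral_mono fun x => ?_)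
  by_cases hint : Integrable (fun x' => (g x - g x') ^ 2) (k x)
  · exact le_of_eq (ofReal_integral_eq_lintegral_ofReal hint
      (Filter.Eventually.of_forall fun x' => sq_nonneg _))
  · rw [integral_undef hint]; simp

lemma osc_pointwise (μ : Measure α) [SFinite μ] (g : α → ℝ) {x x' : α}
    (h1 : (g x : EReal) ≤ essSup (fun t => (g t : EReal)) μ)
    (h2 : essInf (fun t => (g t : EReal)) μ ≤ (g x' : EReal)) :
    ENNReal.ofReal (g x - g x') ≤ oscNorm μ g := by
  rcases le_or_gt (g x - g x') 0 with hd | hd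
  · simp [ENNReal.ofReal_eq_zero.2 hd]
  by_contra hcon
  push_neg at hcon
  have hOtop : oscNorm μ g ≠ ⊤ := ne_top_of_lt hcon
  set c := (oscNorm μ g).toReal with hc
  have hcd : c < g x - g x' := (ENNReal.lt_ofReal_iff_toReal_lt hOtop).1 hcon
  have hc0 : (0:ℝ) ≤ c := ENNReal.toReal_nonneg
  set ε := (g x - g x' - c) / 3 with hε
  have hε0 : 0 < ε := by rw [hε]; linarith
  have hμa : μ {t | g x - ε < g t} ≠ 0 := by
    intro h0
    have hae' : ∀ᵐ t ∂μ, g t ≤ g x - ε := by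
      rw [ae_iff]
      simpa [not_le] using h0
    have hae : (fun t => (g t : EReal)) ≤ᵐ[μ] fun _ => ((g x - ε : ℝ) : EReal) := by
      filter_upwards [hae'] with t ht using EReal.coe_le_coe_iff.2 ht
    have hle : (g x : EReal) ≤ ((g x - ε : ℝ) : EReal) := h1.trans (essSup_le_of_ae_le _ hae)
    rw [EReal.coe_le_coe_iff] at hle
    linarith
  have hμb : μ {t | g t < g x' + ε} ≠ 0 := by
    intro h0
    have hae' : ∀ᵐ t ∂μ, g x' + ε ≤ g t := by
      rw [ae_iff]
      simpa [not_le] using h0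
    have hae : (fun _ => ((g x' + ε : ℝ) : EReal)) ≤ᵐ[μ] fun t => (g t : EReal) := by
      filter_upwards [hae'] with t ht using EReal.coe_le_coe_iff.2 ht
    have hle : ((g x' + ε : ℝ) : EReal) ≤ (g x' : EReal) := (le_essInf_of_ae_le _ hae).trans h2
    rw [EReal.coe_le_coe_iff] at hle
    linarith
  have hrect : (μ.prod μ) ({t | g x - ε < g t} ×ˢ {t | g t < g x' + ε}) ≠ 0 := by
    rw [Measure.prod_prod]
    exact mul_ne_zero hμa hμb
  have hsub : {t | g x - ε < g t} ×ˢ {t | g t < g x' + ε}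
      ⊆ {p : α × α | ¬ (ENNReal.ofReal |g p.1 - g p.2| ≤ oscNorm μ g)} := by
    rintro ⟨t1, t2⟩ ⟨ht1, ht2⟩
    simp only [Set.mem_setOf_eq, not_le]
    simp only [Set.mem_setOf_eq] at ht1 ht2
    have h12 : c < g t1 - g t2 := by
      have h3 : g x - g x' = c + 3 * ε := by rw [hε]; ring
      linarith
    calc oscNorm μ g = ENNReal.ofReal c := (ENNReal.ofReal_toReal hOtop).symm
      _ < ENNReal.ofReal |g t1 - g t2| := by
          rw [ENNReal.ofReal_lt_ofReal_iff (lt_of_le_of_lt hc0 (h12.trans_le (le_abs_self _)))]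
          exact lt_of_lt_of_le h12 (le_abs_self _)
  exact hrect (measure_mono_null hsub (ae_iff.1 (ENNReal.ae_le_essSup _)))

lemma osc_mono (μ ν : Measure α) [SFinite μ] [SFinite ν] (g : α → ℝ)
    (hnull : ν {t | ¬ (essInf (fun t => (g t : EReal)) μ ≤ (g t : EReal) ∧
        (g t : EReal) ≤ essSup (fun t => (g t : EReal)) μ)} = 0) :
    oscNorm ν g ≤ oscNorm μ g := by
  set B := {t | ¬ (essInf (fun t => (g t : EReal)) μ ≤ (g t : EReal) ∧
      (g t : EReal) ≤ essSup (fun t => (g t : EReal)) μ)} with hB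
  have hae : ∀ᵐ p ∂(ν.prod ν), ENNReal.ofReal |g p.1 - g p.2| ≤ oscNorm μ g := by
    have hBB : (ν.prod ν) (B ×ˢ (Set.univ : Set α) ∪ (Set.univ : Set α) ×ˢ B) = 0 := by
      refine le_antisymm (le_trans (measure_union_le _ _) ?_) (by simp)
      rw [Measure.prod_prod, Measure.prod_prod, hnull]
      simp
    rw [ae_iff]
    refine measure_mono_null ?_ hBB
    rintro ⟨t1, t2⟩ hp
    simp only [Set.mem_setOf_eq, not_le] at hp
    by_contra hmem
    simp only [Set.mem_union, Set.mem_prod, Set.mem_univ, and_true, true_and, not_or] at hmem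
    obtain ⟨h1, h2⟩ := hmem
    rw [hB, Set.mem_setOf_eq, not_not] at h1 h2
    rcases le_or_gt (g t2) (g t1) with hle | hlt
    · have := osc_pointwise μ g h1.2 h2.1
      rw [← abs_of_nonneg (sub_nonneg.2 hle)] at this
      exact absurd this (not_le.2 hp)
    · have := osc_pointwise μ g h2.2 h1.1
      rw [← abs_of_nonneg (sub_nonneg.2 hlt.le), abs_sub_comm (g t2)] at this
      exact absurd this (not_le.2 hp)
  exact essSup_le_of_ae_le _ hae

end Helpers

variable {X Y : Type*} [MeasurableSpace X] [MeasurableSpace Y]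

/-- under (A2), `ℰ_{Π_X}(P_X, g) ≤ s·ℰ_{Π_X}(P̄_X, g) + β(s)·‖g‖²_osc`
with `β(s) = ∫ β₂(s, y) Π_Y(dy)`. -/
theorem stmt16
    (π : Measure (X × Y)) [IsProbabilityMeasure π]
    (κ : X → Measure Y) (hκmeas : Measurable κ) (hκprob : ∀ x, IsProbabilityMeasure (κ x))
    (η : Y → Measure X) (hηmeas : Measurable η) (hηprob : ∀ y, IsProbabilityMeasure (η y))
    (hκdis : π = (π.fst).bind (fun x => (κ x).map (fun y => (x, y))))
    (hηdis : π = (π.snd).bind (fun y => (η y).map (fun x => (x, y))))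
    (KH₂ : X × Y → Measure X) (hKH₂meas : Measurable KH₂)
    (hKH₂prob : ∀ p, IsProbabilityMeasure (KH₂ p))
    -- Assumption (A2)
    (β₂ : ℝ → Y → ℝ) (hβ₂meas : ∀ s, Measurable (β₂ s))
    (hβ₂range : ∀ y, ∀ s, 0 < s → β₂ s y ∈ Set.Icc (0 : ℝ) (1 / 4))
    (hβ₂anti : ∀ y, AntitoneOn (fun s => β₂ s y) (Set.Ioi (0 : ℝ)))
    (hβ₂lim : ∀ y, Filter.Tendsto (fun s => β₂ s y) Filter.atTop (nhds 0))
    (hH₂rev : ∀ y, KernelReversible (η y) (fun x => KH₂ (x, y)))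
    (hH₂pos : ∀ y, KernelPositive (η y) (fun x => KH₂ (x, y)))
    (hH₂wpi : ∀ y, ∀ s : ℝ, 0 < s → ∀ g : X → ℝ, MemLp g 2 (η y) →
      ENNReal.ofReal (ProbabilityTheory.variance g (η y)) ≤
        ENNReal.ofReal (s * kernelDirichlet (η y) (fun x => KH₂ (x, y)) g) +
          ENNReal.ofReal (β₂ s y) * (oscNorm (η y) g) ^ 2) :
    ∀ s : ℝ, 0 < s → ∀ g : X → ℝ, MemLp g 2 π.fst →
      ENNReal.ofReal (kernelDirichlet π.fst (fun x => (κ x).bind η) g) ≤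
        ENNReal.ofReal
            (s * kernelDirichlet π.fst (fun x => (κ x).bind (fun y => KH₂ (x, y))) g) +
          ENNReal.ofReal (∫ y, β₂ s y ∂π.snd) * (oscNorm π.fst g) ^ 2 := by
  intro s hs g₀ hg₀
  -- pass to a measurable representative of g₀
  obtain ⟨g, hgsm, hgg'⟩ := hg₀.1
  have hgm : Measurable g := hgsm.measurable
  have hg : MemLp g 2 π.fst := hg₀.ae_eq hgg'
  set P : X → Measure X := fun x => (κ x).bind η with hPdef
  set Pb : X → Measure X := fun x => (κ x).bind (fun y => KH₂ (x, y)) with hPbdef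
  have hPmeas : Measurable P := (Measure.measurable_bind' hηmeas).comp hκmeas
  have hPbmeas : Measurable Pb := by
    apply Measure.measurable_of_measurable_coe
    intro S hS
    have h1 : ∀ x, Pb x S = ∫⁻ y, KH₂ (x, y) S ∂κ x := fun x =>
      Measure.bind_apply hS (hKH₂meas.comp measurable_prodMk_left).aemeasurable
    simp_rw [h1]
    exact meas_lint κ hκmeas hκprob ((Measure.measurable_coe hS).comp hKH₂meas)
  have hPprob : ∀ x, IsProbabilityMeasure (P x) := by
    intro x
    constructor
    rw [Measure.bind_apply MeasurableSet.univ hηmeas.aemeasurable]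
    simp [measure_univ]
  have hPbprob : ∀ x, IsProbabilityMeasure (Pb x) := by
    intro x
    constructor
    have h1 : Pb x Set.univ = ∫⁻ y, KH₂ (x, y) Set.univ ∂κ x :=
      Measure.bind_apply MeasurableSet.univ (hKH₂meas.comp measurable_prodMk_left).aemeasurable
    rw [h1]
    simp [measure_univ]
  have hκmap : Measurable fun x => (κ x).map (fun y => (x, y)) :=
    measurable_map_param κ hκmeas hκprob (fun x y => (x, y))
      (measurable_fst.prodMk measurable_snd)
  have hηmap : Measurable fun y => (η y).map (fun x => (x, y)) :=
    measurable_map_param η hηmeas hηprob (fun y x => (x, y))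
      (measurable_snd.prodMk measurable_fst)
  have F1 : π.fst = π.snd.bind η := by
    ext S hS
    rw [Measure.fst_apply hS]
    conv_lhs => rw [hηdis]
    rw [Measure.bind_apply (measurable_fst hS) hηmap.aemeasurable, Measure.bind_apply hS hηmeas.aemeasurable]
    refine lintegral_congr fun y => ?_
    rw [Measure.map_apply measurable_prodMk_right (measurable_fst hS)]
    congr 1
  have F2 : ∀ f : X → ℝ≥0∞, Measurable f →
      ∫⁻ x, f x ∂π.fst = ∫⁻ y, ∫⁻ x, f x ∂η y ∂π.snd := by
    intro f hf
    rw [F1, Measure.lintegral_bind hηmeas.aemeasurable hf.aemeasurable]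
  have F3 : ∀ F : X × Y → ℝ≥0∞, Measurable F →
      ∫⁻ x, ∫⁻ y, F (x, y) ∂κ x ∂π.fst = ∫⁻ y, ∫⁻ x, F (x, y) ∂η y ∂π.snd := by
    intro F hF
    have hL : ∫⁻ p, F p ∂π = ∫⁻ x, ∫⁻ y, F (x, y) ∂κ x ∂π.fst := by
      conv_lhs => rw [hκdis]
      rw [Measure.lintegral_bind hκmap.aemeasurable hF.aemeasurable]
      exact lintegral_congr fun x => lintegral_map hF measurable_prodMk_left
    have hR : ∫⁻ p, F p ∂π = ∫⁻ y, ∫⁻ x, F (x, y) ∂η y ∂π.snd := by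
      conv_lhs => rw [hηdis]
      rw [Measure.lintegral_bind hηmap.aemeasurable hF.aemeasurable]
      exact lintegral_congr fun y => lintegral_map hF measurable_prodMk_right
    rw [← hL, hR]
  have hfstS : ∀ S : Set X, MeasurableSet S → ∫⁻ y, η y S ∂π.snd = π.fst S := by
    intro S hS
    rw [F1, Measure.bind_apply hS hηmeas.aemeasurable]
  have nulltrans : ∀ B : Set X, MeasurableSet B → π.fst B = 0 → ∀ᵐ y ∂π.snd, η y B = 0 := by
    intro B hB h0
    have hm : Measurable fun y => η y B := (Measure.measurable_coe hB).comp hηmeas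
    have h1 : ∫⁻ y, η y B ∂π.snd = 0 := by rw [hfstS B hB, h0]
    have h2 := (lintegral_eq_zero_iff hm).1 h1
    filter_upwards [h2] with y hy using hy
  have invP : ∀ S : Set X, MeasurableSet S → ∫⁻ x, P x S ∂π.fst = π.fst S := by
    intro S hS
    have h1 : ∀ x, P x S = ∫⁻ y, η y S ∂κ x := fun x => Measure.bind_apply hS hηmeas.aemeasurable
    simp_rw [h1]
    rw [F3 (fun p => η p.2 S) ((Measure.measurable_coe hS).comp (hηmeas.comp measurable_snd)),
      ← hfstS S hS]
    refine lintegral_congr fun y => ?_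
    simp [lintegral_const, measure_univ]
  have invH : ∀ y, ∀ S : Set X, MeasurableSet S → ∫⁻ x, KH₂ (x, y) S ∂η y = η y S := by
    intro y S hS
    have h0 := hH₂rev y Set.univ S MeasurableSet.univ hS
    rw [Measure.restrict_univ] at h0
    rw [h0]
    calc ∫⁻ x in S, KH₂ (x, y) Set.univ ∂η y = ∫⁻ _ in S, 1 ∂η y :=
          setLIntegral_congr_fun hS (fun x _ => measure_univ)
      _ = η y S := setLIntegral_one S
  have invPb : ∀ S : Set X, MeasurableSet S → ∫⁻ x, Pb x S ∂π.fst = π.fst S := by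
    intro S hS
    have h1 : ∀ x, Pb x S = ∫⁻ y, KH₂ (x, y) S ∂κ x := fun x =>
      Measure.bind_apply hS (hKH₂meas.comp measurable_prodMk_left).aemeasurable
    simp_rw [h1]
    rw [F3 (fun p => KH₂ p S) ((Measure.measurable_coe hS).comp hKH₂meas), ← hfstS S hS]
    exact lintegral_congr fun y => invH y S hS
  -- replace g₀ by g in the goal
  obtain ⟨N₀, hNsub, hN₀meas, hN₀null⟩ := exists_measurable_superset_of_null (ae_iff.1 hgg')
  have hker_eq : ∀ k : X → Measure X, Measurable k →
      (∀ S : Set X, MeasurableSet S → ∫⁻ x, k x S ∂π.fst = π.fst S) →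
      kernelDirichlet π.fst k g₀ = kernelDirichlet π.fst k g := by
    intro k hk hkinv
    have h1 : ∫⁻ x, k x N₀ ∂π.fst = 0 := by rw [hkinv N₀ hN₀meas, hN₀null]
    have hkN : ∀ᵐ x ∂π.fst, k x N₀ = 0 := by
      have h2 := (lintegral_eq_zero_iff ((Measure.measurable_coe hN₀meas).comp hk)).1 h1
      filter_upwards [h2] with x hx using hx
    rw [kernelDirichlet, kernelDirichlet]
    congr 1
    apply integral_congr_ae
    filter_upwards [hgg', hkN] with x hx hkx
    apply integral_congr_ae
    have hae : ∀ᵐ x' ∂(k x), g₀ x' = g x' := by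
      rw [ae_iff]
      refine measure_mono_null (fun x' hx' => hNsub ?_) hkx
      simpa using hx'
    filter_upwards [hae] with x' hx'
    rw [hx, hx']
  have hosc_eq : oscNorm π.fst g₀ = oscNorm π.fst g := by
    apply essSup_congr_ae
    have hBB : (π.fst.prod π.fst) (N₀ ×ˢ (Set.univ : Set X) ∪ (Set.univ : Set X) ×ˢ N₀) = 0 := by
      refine le_antisymm (le_trans (measure_union_le _ _) ?_) (by simp)
      rw [Measure.prod_prod, Measure.prod_prod, hN₀null]
      simp
    rw [Filter.EventuallyEq, ae_iff]
    refine measure_mono_null (fun p hp => ?_) hBB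
    simp only [Set.mem_setOf_eq] at hp
    by_contra hmem
    simp only [Set.mem_union, Set.mem_prod, Set.mem_univ, and_true, true_and, not_or] at hmem
    obtain ⟨h1, h2⟩ := hmem
    have e1 : g₀ p.1 = g p.1 := by
      by_contra hne
      exact h1 (hNsub hne)
    have e2 : g₀ p.2 = g p.2 := by
      by_contra hne
      exact h2 (hNsub hne)
    exact hp (by rw [e1, e2])
  rw [hker_eq _ hPmeas invP, hker_eq _ hPbmeas invPb, hosc_eq]
  -- now everything in terms of the measurable g
  set O := oscNorm π.fst g with hO
  have hφ : Measurable fun p : X × X => ENNReal.ofReal ((g p.1 - g p.2) ^ 2) :=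
    measurable_ofReal.comp (((hgm.comp measurable_fst).sub (hgm.comp measurable_snd)).pow_const 2)
  have hsqmeas : Measurable fun x => ENNReal.ofReal (g x ^ 2) :=
    measurable_ofReal.comp (hgm.pow_const 2)
  have hy2 : ∀ᵐ y ∂π.snd, MemLp g 2 (η y) := by
    have hQ : ∫⁻ y, ∫⁻ x, ENNReal.ofReal (g x ^ 2) ∂η y ∂π.snd ≠ ⊤ := by
      rw [← F2 _ hsqmeas, lint_sq_ofReal hg]
      exact ofReal_ne_top
    have hmeasY : Measurable fun y => ∫⁻ x, ENNReal.ofReal (g x ^ 2) ∂η y :=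
      meas_lint η hηmeas hηprob (hsqmeas.comp measurable_snd)
    filter_upwards [ae_lt_top hmeasY hQ] with y hy
    haveI := hηprob y
    refine (memLp_two_iff_integrable_sq hgm.aestronglyMeasurable).2 ?_
    refine ⟨(hgm.pow_const 2).aestronglyMeasurable, ?_⟩
    rw [hasFiniteIntegral_iff_ofReal (Filter.Eventually.of_forall fun x => sq_nonneg _)]
    exact hy
  set M := essSup (fun t => (g t : EReal)) π.fst with hM
  set m := essInf (fun t => (g t : EReal)) π.fst with hm
  set B := {t : X | ¬ (m ≤ (g t : EReal) ∧ (g t : EReal) ≤ M)} with hBdef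
  have hBmeas : MeasurableSet B := by
    have h1 : MeasurableSet {t : X | m ≤ (g t : EReal)} :=
      (measurable_coe_real_ereal.comp hgm) measurableSet_Ici
    have h2 : MeasurableSet {t : X | (g t : EReal) ≤ M} :=
      (measurable_coe_real_ereal.comp hgm) measurableSet_Iic
    have hBeq : B = ({t : X | m ≤ (g t : EReal)} ∩ {t : X | (g t : EReal) ≤ M})ᶜ := by
      ext t
      simp only [hBdef, Set.mem_setOf_eq, Set.mem_compl_iff, Set.mem_inter_iff]
    rw [hBeq]
    exact (h1.inter h2).compl
  have hBnull : π.fst B = 0 := by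
    have h1 : ∀ᵐ t ∂π.fst, (g t : EReal) ≤ M := ae_le_essSup
    have h2 : ∀ᵐ t ∂π.fst, m ≤ (g t : EReal) := ae_essInf_le
    exact ae_iff.1 (h2.and h1)
  have hy1 : ∀ᵐ y ∂π.snd, oscNorm (η y) g ≤ O := by
    filter_upwards [nulltrans B hBmeas hBnull] with y hy
    haveI := hηprob y
    exact osc_mono π.fst (η y) g hy
  have hGmeas : Measurable fun p : X × Y => ∫⁻ x', ENNReal.ofReal ((g p.1 - g x') ^ 2) ∂η p.2 :=
    meas_lint (fun p : X × Y => η p.2) (hηmeas.comp measurable_snd) (fun p => hηprob p.2)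
      (hφ.comp ((measurable_fst.comp measurable_fst).prodMk measurable_snd))
  have hG2meas : Measurable fun p : X × Y => ∫⁻ x', ENNReal.ofReal ((g p.1 - g x') ^ 2) ∂KH₂ p :=
    meas_lint KH₂ hKH₂meas hKH₂prob
      (hφ.comp ((measurable_fst.comp measurable_fst).prodMk measurable_snd))
  have hT1 : ∫⁻ x, ∫⁻ x', ENNReal.ofReal ((g x - g x') ^ 2) ∂P x ∂π.fst
      = ∫⁻ y, ∫⁻ x, ∫⁻ x', ENNReal.ofReal ((g x - g x') ^ 2) ∂η y ∂η y ∂π.snd := by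
    have h1 : ∀ x, ∫⁻ x', ENNReal.ofReal ((g x - g x') ^ 2) ∂P x
        = ∫⁻ y, ∫⁻ x', ENNReal.ofReal ((g x - g x') ^ 2) ∂η y ∂κ x := fun x =>
      Measure.lintegral_bind hηmeas.aemeasurable (hφ.comp (measurable_const.prodMk measurable_id)).aemeasurable
    simp_rw [h1]
    exact F3 _ hGmeas
  have hT2 : ∫⁻ x, ∫⁻ x', ENNReal.ofReal ((g x - g x') ^ 2) ∂Pb x ∂π.fst
      = ∫⁻ y, ∫⁻ x, ∫⁻ x', ENNReal.ofReal ((g x - g x') ^ 2) ∂KH₂ (x, y) ∂η y ∂π.snd := by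
    have h1 : ∀ x, ∫⁻ x', ENNReal.ofReal ((g x - g x') ^ 2) ∂Pb x
        = ∫⁻ y, ∫⁻ x', ENNReal.ofReal ((g x - g x') ^ 2) ∂KH₂ (x, y) ∂κ x := fun x =>
      Measure.lintegral_bind (hKH₂meas.comp measurable_prodMk_left).aemeasurable
        (hφ.comp (measurable_const.prodMk measurable_id)).aemeasurable
    simp_rw [h1]
    exact F3 _ hG2meas
  have hyA : ∀ᵐ y ∂π.snd,
      (∫⁻ x, ∫⁻ x', ENNReal.ofReal ((g x - g x') ^ 2) ∂η y ∂η y)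
        ≤ ENNReal.ofReal s * (∫⁻ x, ∫⁻ x', ENNReal.ofReal ((g x - g x') ^ 2) ∂KH₂ (x, y) ∂η y)
          + 2 * (ENNReal.ofReal (β₂ s y) * O ^ 2) := by
    filter_upwards [hy1, hy2] with y hosc hmem
    haveI := hηprob y
    have hDy : ∫⁻ x, ∫⁻ x', ENNReal.ofReal ((g x - g x') ^ 2) ∂KH₂ (x, y) ∂η y
        = ENNReal.ofReal (2 * kernelDirichlet (η y) (fun x => KH₂ (x, y)) g) :=
      lint_eq_dirichlet (η y) (fun x => KH₂ (x, y)) (hKH₂meas.comp measurable_prodMk_right)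
        (fun x => hKH₂prob _) (invH y) g hgm hmem
    have hVy := lint_eq_variance (η y) g hgm hmem
    have hwpi := hH₂wpi y s hs g hmem
    calc ∫⁻ x, ∫⁻ x', ENNReal.ofReal ((g x - g x') ^ 2) ∂η y ∂η y
        = ENNReal.ofReal (2 * ProbabilityTheory.variance g (η y)) := hVy
      _ = 2 * ENNReal.ofReal (ProbabilityTheory.variance g (η y)) := by
          rw [ENNReal.ofReal_mul (by norm_num : (0:ℝ) ≤ 2), ENNReal.ofReal_ofNat]
      _ ≤ 2 * (ENNReal.ofReal (s * kernelDirichlet (η y) (fun x => KH₂ (x, y)) g)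
            + ENNReal.ofReal (β₂ s y) * oscNorm (η y) g ^ 2) := by gcongr
      _ = ENNReal.ofReal s
            * ENNReal.ofReal (2 * kernelDirichlet (η y) (fun x => KH₂ (x, y)) g)
            + 2 * (ENNReal.ofReal (β₂ s y) * oscNorm (η y) g ^ 2) := by
          rw [ENNReal.ofReal_mul hs.le, ENNReal.ofReal_mul (by norm_num : (0:ℝ) ≤ 2),
            ENNReal.ofReal_ofNat]
          ring
      _ = ENNReal.ofReal s * (∫⁻ x, ∫⁻ x', ENNReal.ofReal ((g x - g x') ^ 2) ∂KH₂ (x, y) ∂η y)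
            + 2 * (ENNReal.ofReal (β₂ s y) * oscNorm (η y) g ^ 2) := by rw [hDy]
      _ ≤ ENNReal.ofReal s * (∫⁻ x, ∫⁻ x', ENNReal.ofReal ((g x - g x') ^ 2) ∂KH₂ (x, y) ∂η y)
            + 2 * (ENNReal.ofReal (β₂ s y) * O ^ 2) := by gcongr
  have hβint : Integrable (fun y => β₂ s y) π.snd := by
    refine (integrable_const (1/4 : ℝ)).mono' (hβ₂meas s).aestronglyMeasurable ?_
    refine Filter.Eventually.of_forall fun y => ?_
    have hr := hβ₂range y s hs
    rw [Real.norm_eq_abs, abs_le]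
    exact ⟨by linarith [hr.1], hr.2⟩
  have hβlint : ∫⁻ y, ENNReal.ofReal (β₂ s y) ∂π.snd = ENNReal.ofReal (∫ y, β₂ s y ∂π.snd) :=
    (ofReal_integral_eq_lintegral_ofReal hβint
      (Filter.Eventually.of_forall fun y => (hβ₂range y s hs).1)).symm
  have hβro : Measurable fun y => ENNReal.ofReal (β₂ s y) :=
    measurable_ofReal.comp (hβ₂meas s)
  have hPbB : ∫⁻ x, ∫⁻ x', ENNReal.ofReal ((g x - g x') ^ 2) ∂Pb x ∂π.fst
      = ENNReal.ofReal (2 * kernelDirichlet π.fst Pb g) :=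
    lint_eq_dirichlet π.fst Pb hPbmeas hPbprob invPb g hgm hg
  have main : 2 * ENNReal.ofReal (kernelDirichlet π.fst P g)
      ≤ 2 * (ENNReal.ofReal (s * kernelDirichlet π.fst Pb g)
        + ENNReal.ofReal (∫ y, β₂ s y ∂π.snd) * O ^ 2) := by
    calc 2 * ENNReal.ofReal (kernelDirichlet π.fst P g)
        = ENNReal.ofReal (2 * kernelDirichlet π.fst P g) := by
          rw [ENNReal.ofReal_mul (by norm_num : (0:ℝ) ≤ 2), ENNReal.ofReal_ofNat]
      _ ≤ ∫⁻ x, ∫⁻ x', ENNReal.ofReal ((g x - g x') ^ 2) ∂P x ∂π.fst :=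
          ofReal_two_dirichlet_le π.fst P g
      _ = ∫⁻ y, ∫⁻ x, ∫⁻ x', ENNReal.ofReal ((g x - g x') ^ 2) ∂η y ∂η y ∂π.snd := hT1
      _ ≤ ∫⁻ y, (ENNReal.ofReal s
            * (∫⁻ x, ∫⁻ x', ENNReal.ofReal ((g x - g x') ^ 2) ∂KH₂ (x, y) ∂η y)
            + 2 * (ENNReal.ofReal (β₂ s y) * O ^ 2)) ∂π.snd := lintegral_mono_ae hyA
      _ = ENNReal.ofReal s
            * (∫⁻ y, ∫⁻ x, ∫⁻ x', ENNReal.ofReal ((g x - g x') ^ 2) ∂KH₂ (x, y) ∂η y ∂π.snd)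
            + 2 * ((∫⁻ y, ENNReal.ofReal (β₂ s y) ∂π.snd) * O ^ 2) := by
          rw [lintegral_add_right _ ((hβro.mul_const _).const_mul 2),
            lintegral_const_mul' _ _ ofReal_ne_top,
            lintegral_const_mul' 2 _ (by norm_num : (2:ℝ≥0∞) ≠ ⊤),
            lintegral_mul_const _ hβro]
      _ = ENNReal.ofReal s * ENNReal.ofReal (2 * kernelDirichlet π.fst Pb g)
            + 2 * (ENNReal.ofReal (∫ y, β₂ s y ∂π.snd) * O ^ 2) := by
          rw [← hT2, hPbB, hβlint]
      _ = 2 * (ENNReal.ofReal (s * kernelDirichlet π.fst Pb g)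
            + ENNReal.ofReal (∫ y, β₂ s y ∂π.snd) * O ^ 2) := by
          rw [ENNReal.ofReal_mul (by norm_num : (0:ℝ) ≤ 2), ENNReal.ofReal_ofNat,
            ENNReal.ofReal_mul hs.le]
          ring
  exact (ENNReal.mul_le_mul_iff_right (by norm_num) (by norm_num : (2:ℝ≥0∞) ≠ ⊤)).1 main

end
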